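/- Let u : ℝ^n → ℝ^m and f : ℝ^m → ℝ^ℓ, and let x ∈ ℝ^n. Suppose u is (Fréchet) differentiable at x with derivative Du(x) and the composition f ∘ u is (Fréchet) differentiable at x with derivative D(f∘u)(x). If Λ := limsup_{y → u(x)} |y − u(x)|/|f(y) − f(u(x))| is finite, then for every h ∈ ℝ^n one has |Du(x)[h]| ≤ Λ·|D(f∘u)(x)[h]|. -/

import Mathlib

open Filter Topology
open scoped ENNReal NNReal

/-- pointwise reverse superposition estimate. If `u` is Fréchet differentiable
at `x`, `f ∘ u` is Fréchet differentiable at `x`, and the limsup factor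
`Λ = limsup_{y → u x} |y - u x| / |f y - f (u x)|` is finite, then for every `h`,
`|Du(x)[h]| ≤ Λ · |D(f∘u)(x)[h]|`. -/
theorem stmt_1 (n m l : ℕ)
    (u : EuclideanSpace ℝ (Fin n) → EuclideanSpace ℝ (Fin m))
    (f : EuclideanSpace ℝ (Fin m) → EuclideanSpace ℝ (Fin l))
    (x : EuclideanSpace ℝ (Fin n))
    (Du : EuclideanSpace ℝ (Fin n) →L[ℝ] EuclideanSpace ℝ (Fin m))
    (Dfu : EuclideanSpace ℝ (Fin n) →L[ℝ] EuclideanSpace ℝ (Fin l))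
    (hu : HasFDerivAt u Du x)
    (hfu : HasFDerivAt (f ∘ u) Dfu x)
    (Λ : ℝ≥0∞)
    (hΛdef : Λ = Filter.limsup
      (fun y => (‖y - u x‖₊ : ℝ≥0∞) / (‖f y - f (u x)‖₊ : ℝ≥0∞)) (𝓝[≠] (u x)))
    (hΛ : Λ ≠ ⊤) :
    ∀ h : EuclideanSpace ℝ (Fin n), ‖Du h‖ ≤ Λ.toReal * ‖Dfu h‖ := by
  intro h
  rcases eq_or_ne (Du h) 0 with h0 | h0
  · rw [h0, norm_zero]
    positivity
  -- the line t ↦ x + t • h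
  set g : ℝ → EuclideanSpace ℝ (Fin m) := fun t => u (x + t • h) with hgdef
  set gf : ℝ → EuclideanSpace ℝ (Fin l) := fun t => f (u (x + t • h)) with hgfdef
  have line : HasDerivAt (fun t : ℝ => x + t • h) h 0 := by
    simpa using ((hasDerivAt_id (0 : ℝ)).smul_const h).const_add x
  have hu' : HasFDerivAt u Du (x + (0 : ℝ) • h) := by simpa using hu
  have hfu' : HasFDerivAt (f ∘ u) Dfu (x + (0 : ℝ) • h) := by simpa using hfu
  have hg : HasDerivAt g (Du h) 0 := hu'.comp_hasDerivAt 0 line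
  have hgf : HasDerivAt gf (Dfu h) 0 := by
    have := hfu'.comp_hasDerivAt 0 line
    exact this
  have hg0 : g 0 = u x := by simp [hgdef]
  have hgf0 : gf 0 = f (u x) := by simp [hgfdef]
  -- slopes
  have t1 : Tendsto (fun t => ‖slope g 0 t‖) (𝓝[≠] (0 : ℝ)) (𝓝 ‖Du h‖) :=
    (hasDerivAt_iff_tendsto_slope.mp hg).norm
  have t2 : Tendsto (fun t => ‖slope gf 0 t‖) (𝓝[≠] (0 : ℝ)) (𝓝 ‖Dfu h‖) :=
    (hasDerivAt_iff_tendsto_slope.mp hgf).norm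
  -- eventually g t ≠ u x
  have hpos : ∀ᶠ t in 𝓝[≠] (0 : ℝ), g t ≠ u x := by
    have : ∀ᶠ t in 𝓝[≠] (0 : ℝ), 0 < ‖slope g 0 t‖ :=
      t1.eventually (eventually_gt_nhds (norm_pos_iff.mpr h0))
    filter_upwards [this] with t ht
    intro hEq
    rw [slope_def_module, hg0, hEq, sub_self, smul_zero, norm_zero] at ht
    exact lt_irrefl 0 ht
  -- g tends to u x within the punctured neighborhood
  have hgt : Tendsto g (𝓝[≠] (0 : ℝ)) (𝓝[≠] (u x)) := by
    rw [tendsto_nhdsWithin_iff]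
    refine ⟨?_, hpos⟩
    have := hg.continuousAt.tendsto
    rw [hg0] at this
    exact this.mono_left nhdsWithin_le_nhds
  have key : ∀ ε : ℝ≥0, 0 < ε → ‖Du h‖ ≤ (Λ + ε).toReal * ‖Dfu h‖ := by
    intro ε hε
    have hεne : (ε : ℝ≥0∞) ≠ 0 := by exact_mod_cast hε.ne'
    have htop : Λ + (ε : ℝ≥0∞) ≠ ⊤ := by
      simp [hΛ]
    have hlt : Λ < Λ + ε := ENNReal.lt_add_right hΛ hεne
    have hev : ∀ᶠ y in 𝓝[≠] (u x),
        (‖y - u x‖₊ : ℝ≥0∞) / (‖f y - f (u x)‖₊ : ℝ≥0∞) < Λ + ε :=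
      Filter.eventually_lt_of_limsup_lt (hΛdef ▸ hlt)
    have hev2 : ∀ᶠ t in 𝓝[≠] (0 : ℝ),
        (‖g t - u x‖₊ : ℝ≥0∞) / (‖f (g t) - f (u x)‖₊ : ℝ≥0∞) < Λ + ε :=
      hgt.eventually hev
    have hineq : ∀ᶠ t in 𝓝[≠] (0 : ℝ),
        ‖slope g 0 t‖ ≤ (Λ + ε).toReal * ‖slope gf 0 t‖ := by
      filter_upwards [hev2, hpos] with t ht hne
      have ha : (‖g t - u x‖₊ : ℝ≥0∞) ≠ 0 := by
        simp [sub_eq_zero, hne]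
      have hb : (‖f (g t) - f (u x)‖₊ : ℝ≥0∞) ≠ 0 := by
        intro hb0
        rw [hb0, ENNReal.div_zero ha] at ht
        exact (not_top_lt ht).elim
      have hmul : (‖g t - u x‖₊ : ℝ≥0∞) < (Λ + ε) * ‖f (g t) - f (u x)‖₊ :=
        (ENNReal.div_lt_iff (Or.inl hb) (Or.inl ENNReal.coe_ne_top)).mp ht
      have hreal : ‖g t - u x‖ ≤ (Λ + ε).toReal * ‖f (g t) - f (u x)‖ := by
        have h2 := (ENNReal.toReal_le_toReal (a := (‖g t - u x‖₊ : ℝ≥0∞))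
          (b := (Λ + ε) * ‖f (g t) - f (u x)‖₊) ENNReal.coe_ne_top
          (ENNReal.mul_ne_top htop ENNReal.coe_ne_top)).mpr hmul.le
        rwa [ENNReal.toReal_mul, ENNReal.coe_toReal, ENNReal.coe_toReal,
          coe_nnnorm, coe_nnnorm] at h2
      rw [slope_def_module, slope_def_module, hg0, hgf0, sub_zero,
        norm_smul, norm_smul, norm_inv, Real.norm_eq_abs]
      calc |t|⁻¹ * ‖g t - u x‖ ≤ |t|⁻¹ * ((Λ + ε).toReal * ‖f (g t) - f (u x)‖) := by
            gcongr
        _ = (Λ + ε).toReal * (|t|⁻¹ * ‖gf t - f (u x)‖) := by ring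
    exact le_of_tendsto_of_tendsto t1 (t2.const_mul _) hineq
  have hΛε : ∀ ε : ℝ≥0, 0 < ε → ‖Du h‖ ≤ (Λ.toReal + ε) * ‖Dfu h‖ := by
    intro ε hε
    have := key ε hε
    rwa [ENNReal.toReal_add hΛ ENNReal.coe_ne_top, ENNReal.coe_toReal] at this
  rcases eq_or_lt_of_le (norm_nonneg (Dfu h)) with hD | hD
  · have := hΛε 1 one_pos
    rw [← hD, mul_zero] at this
    rw [← hD, mul_zero]
    exact this
  · refine le_of_forall_pos_le_add ?_
    intro δ hδ
    have hεpos : (0 : ℝ) < δ / ‖Dfu h‖ := div_pos hδ hD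
    have := hΛε ⟨δ / ‖Dfu h‖, hεpos.le⟩ (by exact_mod_cast hεpos)
    calc ‖Du h‖ ≤ (Λ.toReal + δ / ‖Dfu h‖) * ‖Dfu h‖ := this
      _ = Λ.toReal * ‖Dfu h‖ + δ := by
          field_simp
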